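/- Assume f = h + g with h ∈ S_{μ,L}^{1,1}(X) (0 ≤ μ ≤ L < ∞) and g convex on X. Let (λ_k, x_k, y_k, v_k) be generated by the corrected explicit scheme with x₀, v₀ ∈ X: y_k = (x_k + α_k v_k)/(1+α_k); λ̂_k = λ_k + (α_k/θ_k)(A v_k − b); v_{k+1} = argmin_{v ∈ X} { g(v) + ⟨Aᵀλ̂_k + ∇h_β(y_k), v⟩ + (τ_k/(2α_k))‖v − w_k‖² } where τ_k = γ_k + μ_β α_k and w_k = (γ_k v_k + μ_β α_k y_k)/τ_k; x_{k+1} = (x_k + α_k v_{k+1})/(1+α_k); λ_{k+1} = λ_k + (α_k/θ_k)(A v_{k+1} − b); θ_{k+1} = θ_k/(1+α_k), γ_{k+1} = (γ_k + μ_β α_k)/(1+α_k), θ₀ = 1, γ₀ > 0, with step sizes chosen so that (L_β + ‖A‖²)α_k² = γ_k θ_k. Define E_k = L_β(x_k, λ*) − L_β(x*, λ_k) + (γ_k/2)‖v_k − x*‖² + (θ_k/2)‖λ_k − λ*‖². Then x_k, y_k, v_k ∈ X for all k and E_{k+1} − E_k ≤ −α_k E_{k+1} for all k ∈ ℕ.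 -/

import Mathlib

open scoped RealInnerProductSpace Pointwise

/-- The smallest singular value of a linear map between Euclidean spaces. -/
noncomputable def sigmaMin {n m : ℕ}
    (A : EuclideanSpace ℝ (Fin n) →L[ℝ] EuclideanSpace ℝ (Fin m)) : ℝ :=
  sInf {c : ℝ | ∃ x : EuclideanSpace ℝ (Fin n), ‖x‖ = 1 ∧ ‖A x‖ = c}

/-- The convex subdifferential. -/
def subdiff {n : ℕ} (f : EuclideanSpace ℝ (Fin n) → ℝ)
    (x : EuclideanSpace ℝ (Fin n)) : Set (EuclideanSpace ℝ (Fin n)) :=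
  {p | ∀ y, f x + ⟪p, y - x⟫ ≤ f y}

/-- The normal cone of `X` at `x` (empty if `x ∉ X`). -/
def normalCone {n : ℕ} (X : Set (EuclideanSpace ℝ (Fin n)))
    (x : EuclideanSpace ℝ (Fin n)) : Set (EuclideanSpace ℝ (Fin n)) :=
  {p | x ∈ X ∧ ∀ z ∈ X, ⟪p, z - x⟫ ≤ 0}

set_option maxHeartbeats 2000000

section helpers
variable {E : Type*} [NormedAddCommGroup E] [InnerProductSpace ℝ E]

lemma comb_norm_sq (s t : ℝ) (hst : s + t = 1) (a b c : E) :
    ‖c - (s • a + t • b)‖ ^ 2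
      = s * ‖c - a‖ ^ 2 + t * ‖c - b‖ ^ 2 - s * t * ‖a - b‖ ^ 2 := by
  have h1 : c - (s • a + t • b) = s • (c - a) + t • (c - b) := by
    match_scalars <;> linarith
  have ht : t = 1 - s := by linarith
  subst ht
  rw [h1]
  simp only [← real_inner_self_eq_norm_sq, inner_sub_left, inner_sub_right,
    inner_add_left, inner_add_right, real_inner_smul_left, real_inner_smul_right,
    real_inner_comm b a, real_inner_comm c a, real_inner_comm c b]
  ring

lemma mem_of_comb {X : Set E} (hXcv : Convex ℝ X) {p q z : E} {a : ℝ}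
    (ha : 0 < a) (hp : p ∈ X) (hq : q ∈ X) (hz : (1 + a) • z = p + a • q) :
    z ∈ X := by
  have h1a : (0:ℝ) < 1 + a := by linarith
  have hzz : z = ((1 + a)⁻¹) • p + ((1 + a)⁻¹ * a) • q := by
    have h2 := congrArg (fun w => (1 + a)⁻¹ • w) hz
    simp only [smul_smul, inv_mul_cancel₀ h1a.ne', one_smul, smul_add] at h2
    exact h2
  rw [hzz]
  refine hXcv hp hq (inv_nonneg.mpr h1a.le)
    (mul_nonneg (inv_nonneg.mpr h1a.le) ha.le) ?_
  field_simp

end helpers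

section euclid
variable {n m : ℕ}

lemma sigmaMin_nonneg (A : EuclideanSpace ℝ (Fin n) →L[ℝ] EuclideanSpace ℝ (Fin m)) :
    0 ≤ sigmaMin A := by
  apply Real.sInf_nonneg
  rintro c ⟨x, -, rfl⟩
  positivity

lemma sigmaMin_le (A : EuclideanSpace ℝ (Fin n) →L[ℝ] EuclideanSpace ℝ (Fin m))
    (z : EuclideanSpace ℝ (Fin n)) : sigmaMin A * ‖z‖ ≤ ‖A z‖ := by
  rcases eq_or_ne z 0 with rfl | hz
  · simp
  · have hz' : 0 < ‖z‖ := norm_pos_iff.mpr hz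
    have hmem : ‖A ((‖z‖⁻¹ : ℝ) • z)‖ ∈
        {c : ℝ | ∃ x : EuclideanSpace ℝ (Fin n), ‖x‖ = 1 ∧ ‖A x‖ = c} :=
      ⟨_, by simp [norm_smul, abs_of_nonneg (inv_nonneg.mpr hz'.le),
        inv_mul_cancel₀ hz'.ne'], rfl⟩
    have hbdd : BddBelow {c : ℝ | ∃ x : EuclideanSpace ℝ (Fin n), ‖x‖ = 1 ∧ ‖A x‖ = c} :=
      ⟨0, by rintro c ⟨x, -, rfl⟩; positivity⟩
    have h1 : sigmaMin A ≤ ‖A ((‖z‖⁻¹ : ℝ) • z)‖ := csInf_le hbdd hmem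
    have h2 : ‖A ((‖z‖⁻¹ : ℝ) • z)‖ = ‖z‖⁻¹ * ‖A z‖ := by
      rw [map_smul, norm_smul, Real.norm_eq_abs, abs_of_nonneg (inv_nonneg.mpr hz'.le)]
    rw [h2] at h1
    calc sigmaMin A * ‖z‖ ≤ (‖z‖⁻¹ * ‖A z‖) * ‖z‖ := by
          exact mul_le_mul_of_nonneg_right h1 hz'.le
      _ = ‖A z‖ := by field_simp

lemma quad_expand (A : EuclideanSpace ℝ (Fin n) →L[ℝ] EuclideanSpace ℝ (Fin m))
    (b : EuclideanSpace ℝ (Fin m)) (β : ℝ) (u w : EuclideanSpace ℝ (Fin n)) :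
    β / 2 * ‖A w - b‖ ^ 2 = β / 2 * ‖A u - b‖ ^ 2
      + ⟪β • (ContinuousLinearMap.adjoint A) (A u - b), w - u⟫
      + β / 2 * ‖A (w - u)‖ ^ 2 := by
  have h1 : A w - b = (A u - b) + A (w - u) := by rw [map_sub]; abel
  rw [h1, norm_add_sq_real, real_inner_smul_left, ContinuousLinearMap.adjoint_inner_left]
  ring

lemma descent_lemma {X : Set (EuclideanSpace ℝ (Fin n))} (hXcv : Convex ℝ X)
    {h : EuclideanSpace ℝ (Fin n) → ℝ}
    {gradh : EuclideanSpace ℝ (Fin n) → EuclideanSpace ℝ (Fin n)}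
    {L : ℝ} (hgrad : ∀ z, HasGradientAt h (gradh z) z)
    (hhlip : ∀ u ∈ X, ∀ w ∈ X, ⟪gradh u - gradh w, u - w⟫ ≤ L * ‖u - w‖ ^ 2)
    {u w : EuclideanSpace ℝ (Fin n)} (hu : u ∈ X) (hw : w ∈ X) :
    h w ≤ h u + ⟪gradh u, w - u⟫ + L / 2 * ‖w - u‖ ^ 2 := by
  set d := w - u with hd
  have hline : ∀ t : ℝ, HasDerivAt (fun s : ℝ => u + s • d) d t := by
    intro t
    simpa using ((hasDerivAt_id t).smul_const d).const_add u
  have hphi : ∀ t : ℝ, HasDerivAt (fun s => h (u + s • d)) ⟪gradh (u + t • d), d⟫ t := by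
    intro t
    have h1 := (hgrad (u + t • d)).hasFDerivAt.comp_hasDerivAt t (hline t)
    exact h1
  set F : ℝ → ℝ := fun t => h u + ⟪gradh u, d⟫ * t + (L / 2 * ‖d‖ ^ 2) * t ^ 2
      - h (u + t • d) with hF
  have hF' : ∀ t : ℝ, HasDerivAt F
      (⟪gradh u, d⟫ + (L / 2 * ‖d‖ ^ 2) * (2 * t) - ⟪gradh (u + t • d), d⟫) t := by
    intro t
    have h1 : HasDerivAt (fun t : ℝ => h u + ⟪gradh u, d⟫ * t + (L / 2 * ‖d‖ ^ 2) * t ^ 2)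
        (⟪gradh u, d⟫ + (L / 2 * ‖d‖ ^ 2) * (2 * t)) t := by
      have ha : HasDerivAt (fun t : ℝ => ⟪gradh u, d⟫ * t) ⟪gradh u, d⟫ t := by
        simpa using (hasDerivAt_id t).const_mul ⟪gradh u, d⟫
      have hb : HasDerivAt (fun t : ℝ => (L / 2 * ‖d‖ ^ 2) * t ^ 2)
          ((L / 2 * ‖d‖ ^ 2) * (2 * t)) t := by
        simpa [mul_comm] using (hasDerivAt_pow 2 t).const_mul (L / 2 * ‖d‖ ^ 2)
      exact (ha.const_add (h u)).add hb
    exact h1.sub (hphi t)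
  have hmono : MonotoneOn F (Set.Icc (0:ℝ) 1) := by
    apply monotoneOn_of_deriv_nonneg (convex_Icc 0 1)
    · exact fun t _ => ((hF' t).differentiableAt).continuousAt.continuousWithinAt
    · exact fun t _ => ((hF' t).differentiableAt).differentiableWithinAt
    · intro t ht
      rw [interior_Icc] at ht
      rw [(hF' t).deriv]
      have hzX : u + t • d ∈ X := hXcv.add_smul_sub_mem hu hw ⟨ht.1.le, ht.2.le⟩
      have h2 := hhlip (u + t • d) hzX u hu
      have h3 : u + t • d - u = t • d := by abel
      rw [h3, real_inner_smul_right, inner_sub_left, norm_smul] at h2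
      have h4 : ⟪gradh (u + t • d), d⟫ - ⟪gradh u, d⟫ ≤ L * t * ‖d‖ ^ 2 := by
        have habs : L * (‖(t:ℝ)‖ * ‖d‖) ^ 2 = t * (L * t * ‖d‖ ^ 2) := by
          rw [Real.norm_eq_abs, mul_pow, sq_abs]; ring
        have h5 : t * (⟪gradh (u + t • d), d⟫ - ⟪gradh u, d⟫)
            ≤ t * (L * t * ‖d‖ ^ 2) := by rw [← habs]; exact h2
        exact le_of_mul_le_mul_left h5 ht.1
      linarith
  have h01 := hmono (Set.mem_Icc.mpr ⟨le_refl 0, zero_le_one⟩)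
    (Set.mem_Icc.mpr ⟨zero_le_one, le_refl 1⟩) zero_le_one
  have hF0 : F 0 = 0 := by simp [hF]
  have hF1 : F 1 = h u + ⟪gradh u, d⟫ + L / 2 * ‖d‖ ^ 2 - h w := by
    simp only [hF, one_smul, one_pow, mul_one]
    rw [hd, add_sub_cancel]
  rw [hF0, hF1] at h01
  linarith

lemma aux_limit {κ C B : ℝ} (hκC : 0 < κ * C)
    (key : ∀ t : ℝ, t ∈ Set.Ioo (0:ℝ) 1 → κ * (1 - t) * C ≤ B) : κ * C ≤ B := by
  by_contra hcon
  push_neg at hcon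
  have h12 := key (1/2) (by norm_num)
  have hε0 : 0 < κ * C - B := by linarith
  have hεle : κ * C - B ≤ κ * C / 2 := by nlinarith
  set t : ℝ := (κ * C - B) / (κ * C) with hT
  have ht0 : 0 < t := div_pos hε0 hκC
  have ht1 : t ≤ 1/2 := by rw [hT, div_le_iff₀ hκC]; linarith
  have hthalf := key (t/2) ⟨by linarith, by linarith⟩
  have hcancel : t * (κ * C) = κ * C - B := div_mul_cancel₀ _ hκC.ne'
  nlinarith [hthalf, hcancel]

lemma strong_opt {X : Set (EuclideanSpace ℝ (Fin n))} (hXcv : Convex ℝ X)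
    {g : EuclideanSpace ℝ (Fin n) → ℝ} (hg : ConvexOn ℝ Set.univ g)
    (c w vp : EuclideanSpace ℝ (Fin n)) (κ : ℝ) (hκ : 0 < κ)
    (hvp : vp ∈ X)
    (hmin : ∀ u ∈ X, g vp + ⟪c, vp⟫ + κ * ‖vp - w‖ ^ 2
      ≤ g u + ⟪c, u⟫ + κ * ‖u - w‖ ^ 2)
    {u : EuclideanSpace ℝ (Fin n)} (hu : u ∈ X) :
    g vp + ⟪c, vp⟫ + κ * ‖vp - w‖ ^ 2 + κ * ‖u - vp‖ ^ 2
      ≤ g u + ⟪c, u⟫ + κ * ‖u - w‖ ^ 2 := by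
  have key : ∀ t : ℝ, t ∈ Set.Ioo (0:ℝ) 1 → κ * (1 - t) * ‖u - vp‖ ^ 2 ≤
      g u + ⟪c, u⟫ + κ * ‖u - w‖ ^ 2 - (g vp + ⟪c, vp⟫ + κ * ‖vp - w‖ ^ 2) := by
    intro t ht
    set ut : EuclideanSpace ℝ (Fin n) := (1 - t) • vp + t • u with hut
    have hutX : ut ∈ X := hXcv hvp hu (by linarith [ht.1, ht.2]) ht.1.le (by ring)
    have hmin' := hmin ut hutX
    have hgut : g ut ≤ (1 - t) * g vp + t * g u :=
      hg.2 (Set.mem_univ vp) (Set.mem_univ u) (by linarith [ht.2]) ht.1.le (by ring)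
    have hiut : ⟪c, ut⟫ = (1 - t) * ⟪c, vp⟫ + t * ⟪c, u⟫ := by
      rw [hut, inner_add_right, real_inner_smul_right, real_inner_smul_right]
    have hnut : ‖ut - w‖ ^ 2 = (1 - t) * ‖vp - w‖ ^ 2 + t * ‖u - w‖ ^ 2
        - (1 - t) * t * ‖vp - u‖ ^ 2 := by
      have hcc := comb_norm_sq (1 - t) t (by ring) vp u w
      rw [norm_sub_rev w vp, norm_sub_rev w u, norm_sub_rev w ut] at hcc
      rw [hut]; exact hcc
    have hvpu : ‖vp - u‖ ^ 2 = ‖u - vp‖ ^ 2 := by rw [norm_sub_rev]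
    rw [hnut, hvpu, hiut] at hmin'
    have h6 : t * (κ * (1 - t) * ‖u - vp‖ ^ 2) ≤
        t * (g u + ⟪c, u⟫ + κ * ‖u - w‖ ^ 2 - (g vp + ⟪c, vp⟫ + κ * ‖vp - w‖ ^ 2)) := by
      nlinarith [hmin', hgut]
    exact le_of_mul_le_mul_left h6 ht.1
  rcases eq_or_lt_of_le (norm_nonneg (u - vp)) with hz | hz
  · have : ‖u - vp‖ ^ 2 = 0 := by rw [← hz]; ring
    rw [this]
    have := hmin u hu
    linarith
  · have hκC : 0 < κ * ‖u - vp‖ ^ 2 := by positivity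
    have := aux_limit hκC key
    linarith

end euclid

/-- Theorem 6.1 (contraction part): the corrected explicit forward-backward scheme (6.1)
with step size `(L_β + ‖A‖²) α_k² = γ_k θ_k` keeps iterates in `X` and the Lyapunov
function contracts. -/
theorem corrected_explicit_contraction {n m : ℕ}
    (X : Set (EuclideanSpace ℝ (Fin n)))
    (hXne : X.Nonempty) (hXcl : IsClosed X) (hXcv : Convex ℝ X)
    (h g : EuclideanSpace ℝ (Fin n) → ℝ)
    (gradh : EuclideanSpace ℝ (Fin n) → EuclideanSpace ℝ (Fin n))
    (A : EuclideanSpace ℝ (Fin n) →L[ℝ] EuclideanSpace ℝ (Fin m))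
    (b : EuclideanSpace ℝ (Fin m))
    (μ L β μβ Lβc : ℝ)
    (hμ : 0 ≤ μ) (hμL : μ ≤ L) (hβ : 0 ≤ β)
    (hμβ : μβ = μ + β * sigmaMin A ^ 2)
    (hLβc : Lβc = L + β * ‖A‖ ^ 2)
    (hgrad : ∀ z, HasGradientAt h (gradh z) z)
    (hhsc : ∀ u ∈ X, ∀ w ∈ X,
      h u + ⟪gradh u, w - u⟫ + μ / 2 * ‖w - u‖ ^ 2 ≤ h w)
    (hhlip : ∀ u ∈ X, ∀ w ∈ X, ⟪gradh u - gradh w, u - w⟫ ≤ L * ‖u - w‖ ^ 2)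
    (hgcv : ConvexOn ℝ Set.univ g)
    (Lβ : EuclideanSpace ℝ (Fin n) → EuclideanSpace ℝ (Fin m) → ℝ)
    (hLβ : ∀ z w, Lβ z w = h z + β / 2 * ‖A z - b‖ ^ 2 + g z + ⟪w, A z - b⟫)
    (xs : EuclideanSpace ℝ (Fin n)) (ls : EuclideanSpace ℝ (Fin m))
    (hxs : xs ∈ X) (hKKT1 : A xs = b)
    (hKKT2 : ∃ p ∈ subdiff (fun z => h z + g z) xs, ∃ q ∈ normalCone X xs,
      p + q + (ContinuousLinearMap.adjoint A) ls = 0)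
    (θ γ α : ℕ → ℝ)
    (hα : ∀ k, 0 < α k) (hθ0 : θ 0 = 1) (hγ0 : 0 < γ 0)
    (hθ : ∀ k, θ (k + 1) = θ k / (1 + α k))
    (hγ : ∀ k, γ (k + 1) = (γ k + μβ * α k) / (1 + α k))
    (hstep : ∀ k, (Lβc + ‖A‖ ^ 2) * α k ^ 2 = γ k * θ k)
    (lam : ℕ → EuclideanSpace ℝ (Fin m))
    (x y v ws : ℕ → EuclideanSpace ℝ (Fin n))
    (hx0 : x 0 ∈ X) (hv0 : v 0 ∈ X)
    (hy : ∀ k, (1 + α k) • y k = x k + α k • v k)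
    (hws : ∀ k, (γ k + μβ * α k) • ws k = γ k • v k + (μβ * α k) • y k)
    (lamhat : ℕ → EuclideanSpace ℝ (Fin m))
    (hlamhat : ∀ k, lamhat k = lam k + (α k / θ k) • (A (v k) - b))
    (hvmin : ∀ k, v (k + 1) ∈ X ∧ ∀ u ∈ X,
      g (v (k + 1)) +
        ⟪(ContinuousLinearMap.adjoint A) (lamhat k) + gradh (y k)
          + β • (ContinuousLinearMap.adjoint A) (A (y k) - b), v (k + 1)⟫ +
        (γ k + μβ * α k) / (2 * α k) * ‖v (k + 1) - ws k‖ ^ 2 ≤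
      g u +
        ⟪(ContinuousLinearMap.adjoint A) (lamhat k) + gradh (y k)
          + β • (ContinuousLinearMap.adjoint A) (A (y k) - b), u⟫ +
        (γ k + μβ * α k) / (2 * α k) * ‖u - ws k‖ ^ 2)
    (hx : ∀ k, (1 + α k) • x (k + 1) = x k + α k • v (k + 1))
    (hlam : ∀ k, lam (k + 1) = lam k + (α k / θ k) • (A (v (k + 1)) - b))
    (Ef : ℕ → ℝ)
    (hEf : ∀ k, Ef k = Lβ (x k) ls - Lβ xs (lam k)
      + γ k / 2 * ‖v k - xs‖ ^ 2 + θ k / 2 * ‖lam k - ls‖ ^ 2) :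
    (∀ k, x k ∈ X ∧ y k ∈ X ∧ v k ∈ X) ∧
      ∀ k, Ef (k + 1) - Ef k ≤ -(α k * Ef (k + 1)) := by
  have hμβ0 : 0 ≤ μβ := by
    rw [hμβ]; have : 0 ≤ β * sigmaMin A ^ 2 := by positivity
    linarith
  have hLβc0 : 0 ≤ Lβc := by
    rw [hLβc]; have : 0 ≤ β * ‖A‖ ^ 2 := by positivity
    linarith
  have hθpos : ∀ k, 0 < θ k ∧ θ k ≤ 1 := by
    intro k; induction k with
    | zero => rw [hθ0]; exact ⟨one_pos, le_refl 1⟩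
    | succ k ih =>
      have ha := hα k
      have h1a : (0:ℝ) < 1 + α k := by linarith
      rw [hθ k]
      refine ⟨div_pos ih.1 h1a, ?_⟩
      rw [div_le_one h1a]; linarith [ih.2]
  have hγpos : ∀ k, 0 < γ k := by
    intro k; induction k with
    | zero => exact hγ0
    | succ k ih =>
      have ha := hα k
      rw [hγ k]
      have hnum : 0 < γ k + μβ * α k := by nlinarith [mul_nonneg hμβ0 ha.le]
      exact div_pos hnum (by linarith)
  have hmemxv : ∀ k, x k ∈ X ∧ v k ∈ X := by
    intro k; induction k with
    | zero => exact ⟨hx0, hv0⟩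
    | succ k ih =>
      exact ⟨mem_of_comb hXcv (hα k) ih.1 (hvmin k).1 (hx k), (hvmin k).1⟩
  have hymem : ∀ k, y k ∈ X := fun k =>
    mem_of_comb hXcv (hα k) (hmemxv k).1 (hmemxv k).2 (hy k)
  have hAop : ∀ z : EuclideanSpace ℝ (Fin n), ‖A z‖ ^ 2 ≤ ‖A‖ ^ 2 * ‖z‖ ^ 2 := by
    intro z
    have h1 := A.le_opNorm z
    nlinarith [norm_nonneg (A z), norm_nonneg z, norm_nonneg A]
  have hAxs : A xs - b = 0 := by rw [hKKT1, sub_self]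
  have key : ∀ k, (1 + α k) * Ef (k + 1) ≤ Ef k := by
    intro k
    obtain ⟨hT, hT1⟩ := hθpos k
    have hG := hγpos k
    have ha := hα k
    have h1a : (0:ℝ) < 1 + α k := by linarith
    have hτ : 0 < γ k + μβ * α k := by nlinarith [mul_nonneg hμβ0 ha.le]
    have hxkX := (hmemxv k).1
    have hvkX := (hmemxv k).2
    have hykX := hymem k
    have hvpX := (hvmin k).1
    have hxpX := (hmemxv (k+1)).1
    set Gy := gradh (y k) + β • (ContinuousLinearMap.adjoint A) (A (y k) - b) with hGydef
    have hGyexp : ∀ z : EuclideanSpace ℝ (Fin n), (⟪Gy, z⟫ : ℝ)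
        = ⟪gradh (y k), z⟫ + ⟪β • (ContinuousLinearMap.adjoint A) (A (y k) - b), z⟫ := by
      intro z; rw [hGydef, inner_add_left]
    -- A1: descent at y k evaluated at x (k+1)
    have F1 : h (x (k+1)) + β/2 * ‖A (x (k+1)) - b‖ ^ 2
        ≤ h (y k) + β/2 * ‖A (y k) - b‖ ^ 2 + ⟪Gy, x (k+1) - y k⟫
          + Lβc/2 * ‖x (k+1) - y k‖ ^ 2 := by
      have h1 := descent_lemma hXcv hgrad hhlip hykX hxpX
      have h2 := quad_expand A b β (y k) (x (k+1))
      have h3 : β/2 * ‖A (x (k+1) - y k)‖ ^ 2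
          ≤ β/2 * (‖A‖ ^ 2 * ‖x (k+1) - y k‖ ^ 2) :=
        mul_le_mul_of_nonneg_left (hAop _) (by positivity)
      rw [hGyexp, hLβc]
      linarith only [h1, h2, h3]
    have A1 := mul_le_mul_of_nonneg_left F1 h1a.le
    have A2 : h (y k) + β/2 * ‖A (y k) - b‖ ^ 2 + ⟪Gy, x k - y k⟫
        ≤ h (x k) + β/2 * ‖A (x k) - b‖ ^ 2 := by
      have h1 := hhsc (y k) hykX (x k) hxkX
      have h2 := quad_expand A b β (y k) (x k)
      have h3 : 0 ≤ μ/2 * ‖x k - y k‖ ^ 2 := by positivity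
      have h4 : 0 ≤ β/2 * ‖A (x k - y k)‖ ^ 2 := by positivity
      rw [hGyexp]
      linarith only [h1, h2, h3, h4]
    have F3 : h (y k) + β/2 * ‖A (y k) - b‖ ^ 2 + ⟪Gy, xs - y k⟫
        + μβ/2 * ‖xs - y k‖ ^ 2 ≤ h xs := by
      have h1 := hhsc (y k) hykX xs hxs
      have h2 := quad_expand A b β (y k) xs
      rw [hAxs, norm_zero] at h2
      have h3 : sigmaMin A ^ 2 * ‖xs - y k‖ ^ 2 ≤ ‖A (xs - y k)‖ ^ 2 := by
        have h4 := mul_self_le_mul_self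
          (mul_nonneg (sigmaMin_nonneg A) (norm_nonneg (xs - y k))) (sigmaMin_le A (xs - y k))
        nlinarith [h4]
      have h5 : β/2 * (sigmaMin A ^ 2 * ‖xs - y k‖ ^ 2) ≤ β/2 * ‖A (xs - y k)‖ ^ 2 :=
        mul_le_mul_of_nonneg_left h3 (by positivity)
      rw [hGyexp, hμβ]
      linarith only [h1, h2, h5]
    have A3 := mul_le_mul_of_nonneg_left F3 ha.le
    have A4eq : (1 + α k) * ⟪Gy, x (k+1) - y k⟫
        = ⟪Gy, x k - y k⟫ + α k * ⟪Gy, xs - y k⟫ + α k * ⟪Gy, v (k+1)⟫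
          - α k * ⟪Gy, xs⟫ := by
      have h1 := congrArg (fun z : EuclideanSpace ℝ (Fin n) => (⟪Gy, z⟫ : ℝ)) (hx k)
      simp only [inner_add_right, inner_sub_right, real_inner_smul_right] at h1 ⊢
      linear_combination h1
    -- g convexity on the x-update
    have hxpc : x (k+1) = ((1 + α k)⁻¹) • (x k) + ((1 + α k)⁻¹ * α k) • (v (k+1)) := by
      have h2 := congrArg (fun w : EuclideanSpace ℝ (Fin n) => (1 + α k)⁻¹ • w) (hx k)
      simp only [smul_smul, inv_mul_cancel₀ h1a.ne', one_smul, smul_add] at h2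
      exact h2
    have A10 : (1 + α k) * g (x (k+1)) ≤ g (x k) + α k * g (v (k+1)) := by
      have h1 := hgcv.2 (Set.mem_univ (x k)) (Set.mem_univ (v (k+1)))
        (inv_nonneg.mpr h1a.le) (mul_nonneg (inv_nonneg.mpr h1a.le) ha.le)
        (by field_simp)
      rw [← hxpc] at h1
      simp only [smul_eq_mul] at h1
      have h2 := mul_le_mul_of_nonneg_left h1 h1a.le
      have e1 : (1 + α k) * ((1 + α k)⁻¹ * g (x k)) = g (x k) := by field_simp
      have e2 : (1 + α k) * ((1 + α k)⁻¹ * α k * g (v (k+1)))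
          = α k * g (v (k+1)) := by field_simp
      linarith only [h2, e1, e2]
    have A11eq : (1 + α k) * ⟪ls, A (x (k+1)) - b⟫
        = ⟪ls, A (x k) - b⟫ + α k * ⟪ls, A (v (k+1)) - b⟫ := by
      have h0 := congrArg (fun z : EuclideanSpace ℝ (Fin n) => (⟪ls, A z⟫ : ℝ)) (hx k)
      simp only [map_add, map_smul, inner_add_right, real_inner_smul_right] at h0
      simp only [inner_sub_right]
      linear_combination h0
    have A12eq : θ k / 2 * ‖lam (k+1) - ls‖ ^ 2
        = θ k / 2 * ‖lam k - ls‖ ^ 2 + α k * ⟪lam k - ls, A (v (k+1)) - b⟫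
          + α k ^ 2 / (2 * θ k) * ‖A (v (k+1)) - b‖ ^ 2 := by
      rw [hlam k]
      have hre : lam k + (α k / θ k) • (A (v (k+1)) - b) - ls
          = (lam k - ls) + (α k / θ k) • (A (v (k+1)) - b) := by abel
      rw [hre, norm_add_sq_real, real_inner_smul_right, norm_smul, Real.norm_eq_abs,
        mul_pow, sq_abs]
      field_simp
    have A13eq : α k * ⟪lamhat k, b⟫ - α k * ⟪lamhat k, A (v (k+1))⟫
        + α k * ⟪ls, A (v (k+1)) - b⟫ + α k * ⟪lam k - ls, A (v (k+1)) - b⟫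
        = -(α k ^ 2 / θ k) * ⟪A (v k) - b, A (v (k+1)) - b⟫ := by
      rw [hlamhat k]
      simp only [inner_add_left, inner_sub_left, inner_sub_right, real_inner_smul_left]
      field_simp
      ring
    have A14eq : α k ^ 2 / (2 * θ k) * ‖A (v (k+1)) - b‖ ^ 2
        - (α k ^ 2 / θ k) * ⟪A (v k) - b, A (v (k+1)) - b⟫
        = α k ^ 2 / (2 * θ k) * ‖A (v (k+1) - v k)‖ ^ 2
          - α k ^ 2 / (2 * θ k) * ‖A (v k) - b‖ ^ 2 := by
      have hsub : A (v (k+1)) - b - (A (v k) - b) = A (v (k+1) - v k) := by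
        rw [map_sub]; abel
      have base : ‖A (v (k+1) - v k)‖ ^ 2
          = ‖A (v (k+1)) - b‖ ^ 2 - 2 * ⟪A (v (k+1)) - b, A (v k) - b⟫
            + ‖A (v k) - b‖ ^ 2 := by
        rw [← hsub]; exact norm_sub_sq_real _ _
      have base2 : (⟪A (v k) - b, A (v (k+1)) - b⟫ : ℝ)
          = ⟪A (v (k+1)) - b, A (v k) - b⟫ := real_inner_comm _ _
      linear_combination (-(α k ^ 2 / (2 * θ k))) * base + (-(α k ^ 2 / θ k)) * base2
    have A15 : α k ^ 2 / (2 * θ k) * ‖A (v (k+1) - v k)‖ ^ 2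
        ≤ α k ^ 2 / (2 * θ k) * (‖A‖ ^ 2 * ‖v (k+1) - v k‖ ^ 2) :=
      mul_le_mul_of_nonneg_left (hAop _) (by positivity)
    have A16 : 0 ≤ α k ^ 2 / (2 * θ k) * ‖A (v k) - b‖ ^ 2 := by positivity
    have A17 : 0 ≤ α k * (μβ / 2 * ‖v (k+1) - y k‖ ^ 2) :=
      mul_nonneg ha.le (mul_nonneg (by linarith) (by positivity))
    -- strong optimality of v (k+1)
    have hκpos : 0 < (γ k + μβ * α k) / (2 * α k) := div_pos hτ (by linarith)
    have hso := strong_opt hXcv hgcv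
      ((ContinuousLinearMap.adjoint A) (lamhat k) + gradh (y k)
        + β • (ContinuousLinearMap.adjoint A) (A (y k) - b))
      (ws k) (v (k+1)) ((γ k + μβ * α k) / (2 * α k)) hκpos hvpX
      (fun u hu => (hvmin k).2 u hu) hxs
    have hc : ∀ z : EuclideanSpace ℝ (Fin n),
        (⟪(ContinuousLinearMap.adjoint A) (lamhat k) + gradh (y k)
          + β • (ContinuousLinearMap.adjoint A) (A (y k) - b), z⟫ : ℝ)
        = ⟪lamhat k, A z⟫ + ⟪Gy, z⟫ := by
      intro z
      rw [hGydef]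
      simp only [inner_add_left, ContinuousLinearMap.adjoint_inner_left]
      ring
    simp only [hc] at hso
    rw [hKKT1] at hso
    have hsoS := mul_le_mul_of_nonneg_left hso ha.le
    have hκa1 : α k * ((γ k + μβ * α k) / (2 * α k) * ‖v (k+1) - ws k‖ ^ 2)
        = (γ k + μβ * α k) / 2 * ‖v (k+1) - ws k‖ ^ 2 := by field_simp
    have hκa2 : α k * ((γ k + μβ * α k) / (2 * α k) * ‖xs - v (k+1)‖ ^ 2)
        = (γ k + μβ * α k) / 2 * ‖v (k+1) - xs‖ ^ 2 := by
      rw [norm_sub_rev]; field_simp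
    have hκa3 : α k * ((γ k + μβ * α k) / (2 * α k) * ‖xs - ws k‖ ^ 2)
        = (γ k + μβ * α k) / 2 * ‖xs - ws k‖ ^ 2 := by field_simp
    have S4 : α k * g (v (k+1)) + α k * ⟪lamhat k, A (v (k+1))⟫ + α k * ⟪Gy, v (k+1)⟫
        + (γ k + μβ * α k) / 2 * ‖v (k+1) - ws k‖ ^ 2
        + (γ k + μβ * α k) / 2 * ‖v (k+1) - xs‖ ^ 2
        ≤ α k * g xs + α k * ⟪lamhat k, b⟫ + α k * ⟪Gy, xs⟫
          + (γ k + μβ * α k) / 2 * ‖xs - ws k‖ ^ 2 := by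
      linarith only [hsoS, hκa1, hκa2, hκa3]
    -- w identities
    have hwc : ws k = ((γ k + μβ * α k)⁻¹ * γ k) • (v k)
        + ((γ k + μβ * α k)⁻¹ * (μβ * α k)) • (y k) := by
      have h1 := congrArg (fun z : EuclideanSpace ℝ (Fin n)
        => (γ k + μβ * α k)⁻¹ • z) (hws k)
      simp only [smul_smul, inv_mul_cancel₀ hτ.ne', one_smul, smul_add] at h1
      exact h1
    have hst : (γ k + μβ * α k)⁻¹ * γ k + (γ k + μβ * α k)⁻¹ * (μβ * α k) = 1 := by
      field_simp
    have A6eq : (γ k + μβ * α k) / 2 * ‖xs - ws k‖ ^ 2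
        = γ k / 2 * ‖v k - xs‖ ^ 2 + μβ * α k / 2 * ‖xs - y k‖ ^ 2
          - γ k * (μβ * α k) / (2 * (γ k + μβ * α k)) * ‖v k - y k‖ ^ 2 := by
      rw [hwc, comb_norm_sq _ _ hst (v k) (y k) xs, norm_sub_rev xs (v k)]
      field_simp
    have A7eq : (γ k + μβ * α k) / 2 * ‖v (k+1) - ws k‖ ^ 2
        = γ k / 2 * ‖v (k+1) - v k‖ ^ 2 + μβ * α k / 2 * ‖v (k+1) - y k‖ ^ 2
          - γ k * (μβ * α k) / (2 * (γ k + μβ * α k)) * ‖v k - y k‖ ^ 2 := by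
      rw [hwc, comb_norm_sq _ _ hst (v k) (y k) (v (k+1))]
      field_simp
    -- relating ‖x (k+1) - y k‖ to ‖v (k+1) - v k‖
    have hvec : (1 + α k) • (x (k+1) - y k) = α k • (v (k+1) - v k) := by
      rw [smul_sub, hx k, hy k, smul_sub]
      abel
    have hvecn : (1 + α k) * ‖x (k+1) - y k‖ = α k * ‖v (k+1) - v k‖ := by
      have h1 := congrArg norm hvec
      rwa [norm_smul, norm_smul, Real.norm_eq_abs, Real.norm_eq_abs,
        abs_of_pos h1a, abs_of_pos ha] at h1
    have h2sq : (1 + α k) ^ 2 * ‖x (k+1) - y k‖ ^ 2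
        = α k ^ 2 * ‖v (k+1) - v k‖ ^ 2 := by
      linear_combination ((1 + α k) * ‖x (k+1) - y k‖ + α k * ‖v (k+1) - v k‖) * hvecn
    have A8eq : (1 + α k) * (Lβc / 2 * ‖x (k+1) - y k‖ ^ 2)
        = Lβc * α k ^ 2 / (2 * (1 + α k)) * ‖v (k+1) - v k‖ ^ 2 := by
      rw [eq_comm, div_mul_eq_mul_div, div_eq_iff (by positivity : (2*(1+α k)) ≠ 0)]
      linear_combination (-Lβc) * h2sq
    -- step-size bound
    have hTa : θ k ≤ 1 + α k := by linarith
    have hmul : Lβc * α k ^ 2 * θ k ≤ Lβc * α k ^ 2 * (1 + α k) :=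
      mul_le_mul_of_nonneg_left hTa (by positivity)
    have hGT : γ k * (θ k * (1 + α k)) = ‖A‖ ^ 2 * α k ^ 2 * (1 + α k)
        + Lβc * α k ^ 2 * (1 + α k) := by
      linear_combination (-(1 + α k)) * hstep k
    have F10 : α k ^ 2 * ‖A‖ ^ 2 / θ k + α k ^ 2 * Lβc / (1 + α k) ≤ γ k := by
      rw [div_add_div _ _ hT.ne' h1a.ne', div_le_iff₀ (by positivity)]
      linarith only [hmul, hGT]
    have BND : α k ^ 2 / (2 * θ k) * (‖A‖ ^ 2 * ‖v (k+1) - v k‖ ^ 2)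
        + Lβc * α k ^ 2 / (2 * (1 + α k)) * ‖v (k+1) - v k‖ ^ 2
        ≤ γ k / 2 * ‖v (k+1) - v k‖ ^ 2 := by
      have h1 := mul_le_mul_of_nonneg_right F10 (sq_nonneg ‖v (k+1) - v k‖)
      have e1 : (α k ^ 2 * ‖A‖ ^ 2 / θ k + α k ^ 2 * Lβc / (1 + α k)) * ‖v (k+1) - v k‖ ^ 2
          = 2 * (α k ^ 2 / (2 * θ k) * (‖A‖ ^ 2 * ‖v (k+1) - v k‖ ^ 2))
            + 2 * (Lβc * α k ^ 2 / (2 * (1 + α k)) * ‖v (k+1) - v k‖ ^ 2) := by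
        field_simp
      linarith only [h1, e1]
    -- scaling of the Lyapunov coefficients
    have Aγeq : (1 + α k) * (γ (k+1) / 2 * ‖v (k+1) - xs‖ ^ 2)
        = (γ k + μβ * α k) / 2 * ‖v (k+1) - xs‖ ^ 2 := by
      rw [hγ k]; field_simp
    have Aθeq : (1 + α k) * (θ (k+1) / 2 * ‖lam (k+1) - ls‖ ^ 2)
        = θ k / 2 * ‖lam (k+1) - ls‖ ^ 2 := by
      rw [hθ k]; field_simp
    have hfstar : ∀ j, Lβ xs (lam j) = h xs + g xs := by
      intro j; rw [hLβ, hAxs]; simp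
    -- staged assembly
    have C1 : (1 + α k) * (h (x (k+1)) + β/2 * ‖A (x (k+1)) - b‖ ^ 2 + g (x (k+1))
          + ⟪ls, A (x (k+1)) - b⟫)
        ≤ h (x k) + β/2 * ‖A (x k) - b‖ ^ 2 + g (x k) + ⟪ls, A (x k) - b⟫
          + α k * h xs + α k * g (v (k+1)) + α k * ⟪Gy, v (k+1)⟫ - α k * ⟪Gy, xs⟫
          + α k * ⟪ls, A (v (k+1)) - b⟫ + (1 + α k) * (Lβc/2 * ‖x (k+1) - y k‖ ^ 2)
          - α k * (μβ/2 * ‖xs - y k‖ ^ 2) := by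
      linarith only [A1, A2, A3, A4eq, A10, A11eq]
    have C2 : α k * g (v (k+1)) + α k * ⟪Gy, v (k+1)⟫ - α k * ⟪Gy, xs⟫
        ≤ α k * g xs + α k * ⟪lamhat k, b⟫ - α k * ⟪lamhat k, A (v (k+1))⟫
          + (γ k + μβ * α k) / 2 * ‖xs - ws k‖ ^ 2
          - (γ k + μβ * α k) / 2 * ‖v (k+1) - ws k‖ ^ 2
          - (γ k + μβ * α k) / 2 * ‖v (k+1) - xs‖ ^ 2 := by
      linarith only [S4]
    have C3 : (γ k + μβ * α k) / 2 * ‖xs - ws k‖ ^ 2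
          - (γ k + μβ * α k) / 2 * ‖v (k+1) - ws k‖ ^ 2
        ≤ γ k / 2 * ‖v k - xs‖ ^ 2 + μβ * α k / 2 * ‖xs - y k‖ ^ 2
          - γ k / 2 * ‖v (k+1) - v k‖ ^ 2 - μβ * α k / 2 * ‖v (k+1) - y k‖ ^ 2 := by
      linarith only [A6eq, A7eq]
    have C4 : α k * ⟪lamhat k, b⟫ - α k * ⟪lamhat k, A (v (k+1))⟫
          + α k * ⟪ls, A (v (k+1)) - b⟫ + θ k / 2 * ‖lam (k+1) - ls‖ ^ 2
        ≤ θ k / 2 * ‖lam k - ls‖ ^ 2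
          + α k ^ 2 / (2 * θ k) * (‖A‖ ^ 2 * ‖v (k+1) - v k‖ ^ 2) := by
      linarith only [A12eq, A13eq, A14eq, A15, A16]
    have C5 : (1 + α k) * (Lβc/2 * ‖x (k+1) - y k‖ ^ 2)
          + α k ^ 2 / (2 * θ k) * (‖A‖ ^ 2 * ‖v (k+1) - v k‖ ^ 2)
        ≤ γ k / 2 * ‖v (k+1) - v k‖ ^ 2 := by
      linarith only [A8eq, BND]
    rw [hEf (k+1), hEf k, hLβ (x (k+1)) ls, hLβ (x k) ls, hfstar (k+1), hfstar k]
    linarith only [C1, C2, C3, C4, C5, Aγeq, Aθeq, A17]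
  refine ⟨fun k => ⟨(hmemxv k).1, hymem k, (hmemxv k).2⟩, fun k => ?_⟩
  have h1 := key k
  have h2 : (1 + α k) * Ef (k+1) = Ef (k+1) + α k * Ef (k+1) := by ring
  linarith
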